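/- arXiv:2101.11657 — 2 statements merged into one kernel-verified Lean document; each statement's English description precedes it below -/
import Mathlib

section
/- (RG-factorization of the GTH algorithm.) Let P be an N×N row-stochastic irreducible matrix whose GTH recursion matrices P⁽ⁿ⁾ are well defined (each denominator S_n := ∑_{k=1}^{n−1} p⁽ⁿ⁾_{n,k} positive for 2 ≤ n ≤ N). Define the strictly upper triangular matrix R_U by (R_U)_{i,n} = p⁽ⁿ⁾_{i,n} / S_n for i < n, the strictly lower triangular matrix G_L by (G_L)_{n,j} = p⁽ⁿ⁾_{n,j} / S_n for j < n, and the diagonal matrix Ψ_D = diag(ψ_1, …, ψ_N) with ψ_n = p⁽ⁿ⁾_{n,n}. Then I − P = (I − R_U)(I − Ψ_D)(I − G_L). -/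
/-- A square real matrix is row-stochastic if all entries are nonnegative
and each row sums to 1. -/
def RowStochastic {ι : Type*} [Fintype ι] (P : Matrix ι ι ℝ) : Prop :=
  (∀ i j, 0 ≤ P i j) ∧ ∀ i, ∑ j, P i j = 1

/-- A square matrix is irreducible if for all states `i, j` some power of the matrix
has a positive `(i, j)` entry. -/
def MatIrreducible {ι : Type*} [Fintype ι] [DecidableEq ι] (P : Matrix ι ι ℝ) : Prop :=
  ∀ i j, ∃ k : ℕ, 0 < (P ^ k) i j

/-- One GTH elimination step: eliminate the last state of an `(n+1) × (n+1)` matrix. -/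
noncomputable def gthStep {n : ℕ} (P : Matrix (Fin (n + 1)) (Fin (n + 1)) ℝ) :
    Matrix (Fin n) (Fin n) ℝ :=
  fun i j =>
    P i.castSucc j.castSucc +
      P i.castSucc (Fin.last n) * P (Fin.last n) j.castSucc /
        ∑ k : Fin n, P (Fin.last n) k.castSucc

/-- The GTH (censoring) recursion: `gthFam P N = P` and
`gthFam P (n-1) = gthStep (gthFam P n)`, i.e. the matrices `P⁽ⁿ⁾` of the GTH algorithm
(state `m + 1` of the paper corresponds to index `m : Fin n`). -/
noncomputable def gthFam : {N : ℕ} → Matrix (Fin N) (Fin N) ℝ → (n : ℕ) →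
    Matrix (Fin n) (Fin n) ℝ
  | 0, _, _ => 0
  | M + 1, P, n =>
    if h : n = M + 1 then (by subst h; exact P) else gthFam (gthStep P) n

/-- The GTH pivot denominator `S_{m+1} = ∑_{k=1}^{m} p⁽ᵐ⁺¹⁾_{m+1,k}` for state `m + 1`. -/
noncomputable def gthS {N : ℕ} (P : Matrix (Fin N) (Fin N) ℝ) (m : ℕ) : ℝ :=
  ∑ k : Fin m, gthFam P (m + 1) (Fin.last m) k.castSucc

/-- The strictly upper triangular matrix `R_U` of the RG-factorization:
`(R_U)_{i,n} = p⁽ⁿ⁾_{i,n} / S_n` for `i < n`. -/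
noncomputable def gthRU {N : ℕ} (P : Matrix (Fin N) (Fin N) ℝ) :
    Matrix (Fin N) (Fin N) ℝ :=
  fun i j =>
    if h : (i : ℕ) < (j : ℕ) then
      gthFam P ((j : ℕ) + 1) ⟨(i : ℕ), Nat.lt_succ_of_lt h⟩ (Fin.last (j : ℕ)) /
        gthS P (j : ℕ)
    else 0

/-- The strictly lower triangular matrix `G_L` of the RG-factorization:
`(G_L)_{n,j} = p⁽ⁿ⁾_{n,j} / S_n` for `j < n`. -/
noncomputable def gthGL {N : ℕ} (P : Matrix (Fin N) (Fin N) ℝ) :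
    Matrix (Fin N) (Fin N) ℝ :=
  fun i j =>
    if h : (j : ℕ) < (i : ℕ) then
      gthFam P ((i : ℕ) + 1) (Fin.last (i : ℕ)) ⟨(j : ℕ), Nat.lt_succ_of_lt h⟩ /
        gthS P (i : ℕ)
    else 0

/-- The diagonal matrix `Ψ_D = diag(ψ_1, …, ψ_N)` with `ψ_n = p⁽ⁿ⁾_{n,n}`. -/
noncomputable def gthPsi {N : ℕ} (P : Matrix (Fin N) (Fin N) ℝ) :
    Matrix (Fin N) (Fin N) ℝ :=
  Matrix.diagonal fun n => gthFam P ((n : ℕ) + 1) (Fin.last (n : ℕ)) (Fin.last (n : ℕ))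

lemma gthFam_self {M : ℕ} (P : Matrix (Fin (M+1)) (Fin (M+1)) ℝ) :
    gthFam P (M+1) = P := by
  rw [gthFam]; simp

lemma gthFam_ne {M : ℕ} (P : Matrix (Fin (M+1)) (Fin (M+1)) ℝ) (n : ℕ) (h : n ≠ M + 1) :
    gthFam P n = gthFam (gthStep P) n := by
  rw [gthFam, dif_neg h]

lemma gthS_ne {M : ℕ} (P : Matrix (Fin (M+1)) (Fin (M+1)) ℝ) (m : ℕ) (h : m ≠ M) :
    gthS P m = gthS (gthStep P) m := by
  unfold gthS
  rw [gthFam_ne P (m+1) (by omega)]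

lemma gthS_last {M : ℕ} (P : Matrix (Fin (M+1)) (Fin (M+1)) ℝ) :
    gthS P M = ∑ k : Fin M, P (Fin.last M) k.castSucc := by
  unfold gthS
  rw [gthFam_self]

lemma gthRU_cast {M : ℕ} (P : Matrix (Fin (M+1)) (Fin (M+1)) ℝ) (i j : Fin M) :
    gthRU P i.castSucc j.castSucc = gthRU (gthStep P) i j := by
  unfold gthRU
  simp only [Fin.coe_castSucc]
  by_cases h : (i:ℕ) < (j:ℕ)
  · have hj := j.isLt
    rw [dif_pos h, dif_pos h, gthFam_ne P ((j:ℕ)+1) (by omega), gthS_ne P (j:ℕ) (by omega)]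
  · rw [dif_neg h, dif_neg h]

lemma gthRU_last_col {M : ℕ} (P : Matrix (Fin (M+1)) (Fin (M+1)) ℝ) (i : Fin M) :
    gthRU P i.castSucc (Fin.last M) = P i.castSucc (Fin.last M) / gthS P M := by
  unfold gthRU
  rw [dif_pos (show ((i.castSucc : Fin (M+1)):ℕ) < ((Fin.last M):ℕ) from i.isLt)]
  show gthFam P (M+1) _ _ / gthS P M = _
  rw [gthFam_self]; rfl

lemma gthRU_not_lt {M : ℕ} (P : Matrix (Fin M) (Fin M) ℝ) {i j : Fin M}
    (h : ¬ (i:ℕ) < (j:ℕ)) : gthRU P i j = 0 := dif_neg h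

lemma gthGL_cast {M : ℕ} (P : Matrix (Fin (M+1)) (Fin (M+1)) ℝ) (i j : Fin M) :
    gthGL P i.castSucc j.castSucc = gthGL (gthStep P) i j := by
  unfold gthGL
  simp only [Fin.coe_castSucc]
  by_cases h : (j:ℕ) < (i:ℕ)
  · have hi := i.isLt
    rw [dif_pos h, dif_pos h, gthFam_ne P ((i:ℕ)+1) (by omega), gthS_ne P (i:ℕ) (by omega)]
  · rw [dif_neg h, dif_neg h]

lemma gthGL_last_row {M : ℕ} (P : Matrix (Fin (M+1)) (Fin (M+1)) ℝ) (j : Fin M) :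
    gthGL P (Fin.last M) j.castSucc = P (Fin.last M) j.castSucc / gthS P M := by
  unfold gthGL
  rw [dif_pos (show ((j.castSucc : Fin (M+1)):ℕ) < ((Fin.last M):ℕ) from j.isLt)]
  show gthFam P (M+1) _ _ / gthS P M = _
  rw [gthFam_self]; rfl

lemma gthGL_not_lt {M : ℕ} (P : Matrix (Fin M) (Fin M) ℝ) {i j : Fin M}
    (h : ¬ (j:ℕ) < (i:ℕ)) : gthGL P i j = 0 := dif_neg h

lemma gthPsi_cast {M : ℕ} (P : Matrix (Fin (M+1)) (Fin (M+1)) ℝ) (k : Fin M) :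
    gthFam P (((k.castSucc : Fin (M+1)):ℕ) + 1) (Fin.last _) (Fin.last _)
      = gthFam (gthStep P) ((k:ℕ) + 1) (Fin.last _) (Fin.last _) := by
  have hk := k.isLt
  show gthFam P ((k:ℕ)+1) _ _ = _
  rw [gthFam_ne P ((k:ℕ)+1) (by omega)]; rfl

lemma gthPsi_last {M : ℕ} (P : Matrix (Fin (M+1)) (Fin (M+1)) ℝ) :
    gthFam P (((Fin.last M : Fin (M+1)):ℕ) + 1) (Fin.last _) (Fin.last _)
      = P (Fin.last M) (Fin.last M) := by
  show gthFam P (M+1) _ _ = _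
  rw [gthFam_self]; rfl

lemma triple_apply {N : ℕ} (R G : Matrix (Fin N) (Fin N) ℝ) (ψ : Fin N → ℝ) (i j : Fin N) :
    ((1 - R) * (1 - Matrix.diagonal ψ) * (1 - G)) i j
      = ∑ k, (1 - R) i k * (1 - ψ k) * (1 - G) k j := by
  have hD : (1 : Matrix (Fin N) (Fin N) ℝ) - Matrix.diagonal ψ
      = Matrix.diagonal (fun k => 1 - ψ k) := by
    rw [← Matrix.diagonal_one, Matrix.diagonal_sub]
  rw [hD, Matrix.mul_apply]
  refine Finset.sum_congr rfl fun k _ => ?_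
  rw [Matrix.mul_diagonal]

lemma rowStochastic_gthStep {M : ℕ} (P : Matrix (Fin (M+1)) (Fin (M+1)) ℝ)
    (hP : RowStochastic P) (hS : 0 < ∑ k : Fin M, P (Fin.last M) k.castSucc) :
    RowStochastic (gthStep P) := by
  set D := ∑ k : Fin M, P (Fin.last M) k.castSucc with hDdef
  constructor
  · intro i j
    unfold gthStep
    exact add_nonneg (hP.1 _ _)
      (div_nonneg (mul_nonneg (hP.1 _ _) (hP.1 _ _)) hS.le)
  · intro i
    unfold gthStep
    rw [Finset.sum_add_distrib]
    have h1 : ∑ j : Fin M, P i.castSucc j.castSucc = 1 - P i.castSucc (Fin.last M) := by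
      have := hP.2 i.castSucc
      rw [Fin.sum_univ_castSucc] at this
      linarith
    have h2 : ∑ j : Fin M, P i.castSucc (Fin.last M) * P (Fin.last M) j.castSucc / D
        = P i.castSucc (Fin.last M) := by
      rw [← Finset.sum_div, ← Finset.mul_sum, ← hDdef, mul_div_assoc,
        div_self hS.ne', mul_one]
    rw [h1, h2]; ring


lemma entryA_cc {M : ℕ} (P : Matrix (Fin (M+1)) (Fin (M+1)) ℝ) (i k : Fin M) :
    (1 - gthRU P) i.castSucc k.castSucc = (1 - gthRU (gthStep P)) i k := by
  simp [Matrix.sub_apply, Matrix.one_apply, Fin.castSucc_inj, gthRU_cast]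

lemma entryA_cl {M : ℕ} (P : Matrix (Fin (M+1)) (Fin (M+1)) ℝ) (i : Fin M) :
    (1 - gthRU P) i.castSucc (Fin.last M) = -(P i.castSucc (Fin.last M) / gthS P M) := by
  rw [Matrix.sub_apply, Matrix.one_apply_ne (Fin.castSucc_lt_last i).ne, gthRU_last_col]
  ring

lemma entryA_lc {M : ℕ} (P : Matrix (Fin (M+1)) (Fin (M+1)) ℝ) (k : Fin M) :
    (1 - gthRU P) (Fin.last M) k.castSucc = 0 := by
  rw [Matrix.sub_apply, Matrix.one_apply_ne (Fin.castSucc_lt_last k).ne',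
    gthRU_not_lt P (by simp only [Fin.val_last, Fin.coe_castSucc]; omega)]
  ring

lemma entryA_ll {M : ℕ} (P : Matrix (Fin (M+1)) (Fin (M+1)) ℝ) :
    (1 - gthRU P) (Fin.last M) (Fin.last M) = 1 := by
  rw [Matrix.sub_apply, Matrix.one_apply_eq, gthRU_not_lt P (lt_irrefl _)]
  ring

lemma entryC_cc {M : ℕ} (P : Matrix (Fin (M+1)) (Fin (M+1)) ℝ) (k j : Fin M) :
    (1 - gthGL P) k.castSucc j.castSucc = (1 - gthGL (gthStep P)) k j := by
  simp [Matrix.sub_apply, Matrix.one_apply, Fin.castSucc_inj, gthGL_cast]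

lemma entryC_lc {M : ℕ} (P : Matrix (Fin (M+1)) (Fin (M+1)) ℝ) (j : Fin M) :
    (1 - gthGL P) (Fin.last M) j.castSucc = -(P (Fin.last M) j.castSucc / gthS P M) := by
  rw [Matrix.sub_apply, Matrix.one_apply_ne (Fin.castSucc_lt_last j).ne', gthGL_last_row]
  ring

lemma entryC_cl {M : ℕ} (P : Matrix (Fin (M+1)) (Fin (M+1)) ℝ) (k : Fin M) :
    (1 - gthGL P) k.castSucc (Fin.last M) = 0 := by
  rw [Matrix.sub_apply, Matrix.one_apply_ne (Fin.castSucc_lt_last k).ne,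
    gthGL_not_lt P (by simp only [Fin.val_last, Fin.coe_castSucc]; omega)]
  ring

lemma entryC_ll {M : ℕ} (P : Matrix (Fin (M+1)) (Fin (M+1)) ℝ) :
    (1 - gthGL P) (Fin.last M) (Fin.last M) = 1 := by
  rw [Matrix.sub_apply, Matrix.one_apply_eq, gthGL_not_lt P (lt_irrefl _)]
  ring

lemma gth_aux : ∀ (N : ℕ) (P : Matrix (Fin N) (Fin N) ℝ), RowStochastic P →
    (∀ m : ℕ, 1 ≤ m → m + 1 ≤ N → 0 < gthS P m) →
    (1 : Matrix (Fin N) (Fin N) ℝ) - P = (1 - gthRU P) * (1 - gthPsi P) * (1 - gthGL P)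
  | 0, P, _, _ => by
      ext i j; exact i.elim0
  | 1, P, hP, _ => by
      ext i j
      unfold gthPsi
      rw [triple_apply, Fin.sum_univ_one]
      have hi : i = 0 := Subsingleton.elim i 0
      have hj : j = 0 := Subsingleton.elim j 0
      subst hi; subst hj
      have hRU : gthRU P 0 0 = 0 := gthRU_not_lt P (by omega)
      have hGL : gthGL P 0 0 = 0 := gthGL_not_lt P (by omega)
      have hpsi : gthFam P (((0 : Fin 1) : ℕ) + 1) (Fin.last _) (Fin.last _)
          = P 0 0 := by
        show gthFam P 1 _ _ = _
        rw [gthFam_self]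
        rfl
      simp [Matrix.sub_apply, Matrix.one_apply, hRU, hGL, hpsi]
      rw [gthFam_self]
  | (M+2), P, hP, hden => by
      have hS : 0 < gthS P (M+1) := hden (M+1) (by omega) (by omega)
      have hSsum : gthS P (M+1)
          = ∑ k : Fin (M+1), P (Fin.last (M+1)) k.castSucc := gthS_last P
      have hP' : RowStochastic (gthStep P) :=
        rowStochastic_gthStep P hP (by rw [← hSsum]; exact hS)
      have hden' : ∀ m : ℕ, 1 ≤ m → m + 1 ≤ M + 1 → 0 < gthS (gthStep P) m := by
        intro m h1 h2
        rw [← gthS_ne P m (by omega)]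
        exact hden m h1 (by omega)
      have IH := gth_aux (M+1) (gthStep P) hP' hden'
      have hlast : (∑ k : Fin (M+1), P (Fin.last (M+1)) k.castSucc)
          + P (Fin.last (M+1)) (Fin.last (M+1)) = 1 := by
        have h := hP.2 (Fin.last (M+1))
        rw [Fin.sum_univ_castSucc] at h
        exact h
      have hSd : 1 - P (Fin.last (M+1)) (Fin.last (M+1)) = gthS P (M+1) := by
        rw [hSsum]; linarith
      have hne : (1:ℝ) - P (Fin.last (M+1)) (Fin.last (M+1)) ≠ 0 := by
        rw [hSd]; exact hS.ne'
      ext i j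
      unfold gthPsi
      rw [triple_apply, Fin.sum_univ_castSucc]
      induction i using Fin.lastCases with
      | last =>
        rw [entryA_ll, gthPsi_last]
        have hz : ∀ k : Fin (M+1),
            (1 - gthRU P) (Fin.last (M+1)) k.castSucc
              * (1 - gthFam P (((k.castSucc : Fin (M+2)) : ℕ) + 1) (Fin.last _) (Fin.last _))
              * (1 - gthGL P) k.castSucc j = 0 := by
          intro k
          rw [entryA_lc]; ring
        rw [Finset.sum_congr rfl fun k _ => hz k, Finset.sum_const_zero, zero_add]
        induction j using Fin.lastCases with
        | last =>
          rw [entryC_ll, Matrix.sub_apply, Matrix.one_apply_eq]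
          ring
        | cast j' =>
          rw [entryC_lc, Matrix.sub_apply,
            Matrix.one_apply_ne (Fin.castSucc_lt_last j').ne', ← hSd]
          field_simp
          ring
      | cast i' =>
        rw [entryA_cl, gthPsi_last]
        induction j using Fin.lastCases with
        | last =>
          have hz : ∀ k : Fin (M+1),
              (1 - gthRU P) i'.castSucc k.castSucc
                * (1 - gthFam P (((k.castSucc : Fin (M+2)) : ℕ) + 1) (Fin.last _) (Fin.last _))
                * (1 - gthGL P) k.castSucc (Fin.last (M+1)) = 0 := by
            intro k
            rw [entryC_cl]; ring
          rw [Finset.sum_congr rfl fun k _ => hz k, Finset.sum_const_zero, zero_add,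
            entryC_ll, Matrix.sub_apply,
            Matrix.one_apply_ne (Fin.castSucc_lt_last i').ne, ← hSd]
          field_simp
          ring
        | cast j' =>
          have hsum : (∑ k : Fin (M+1),
              (1 - gthRU P) i'.castSucc k.castSucc
                * (1 - gthFam P (((k.castSucc : Fin (M+2)) : ℕ) + 1) (Fin.last _) (Fin.last _))
                * (1 - gthGL P) k.castSucc j'.castSucc)
              = ((1 - gthRU (gthStep P)) * (1 - gthPsi (gthStep P))
                  * (1 - gthGL (gthStep P))) i' j' := by
            unfold gthPsi
            rw [triple_apply]
            refine Finset.sum_congr rfl fun k _ => ?_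
            rw [entryA_cc, gthPsi_cast, entryC_cc]
          rw [hsum, ← IH, entryC_lc, ← hSd]
          have hstep : gthStep P i' j' = P i'.castSucc j'.castSucc
              + P i'.castSucc (Fin.last (M+1)) * P (Fin.last (M+1)) j'.castSucc
                / (1 - P (Fin.last (M+1)) (Fin.last (M+1))) := by
            unfold gthStep
            rw [show (∑ k : Fin (M+1), P (Fin.last (M+1)) k.castSucc)
              = 1 - P (Fin.last (M+1)) (Fin.last (M+1)) from by linarith]
          rw [Matrix.sub_apply, Matrix.sub_apply, hstep, Matrix.one_apply, Matrix.one_apply]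
          simp only [Fin.castSucc_inj]
          by_cases hij : i' = j'
          · simp only [if_pos hij]
            field_simp
            ring
          · simp only [if_neg hij]
            field_simp
            ring

/-- RG-factorization of the GTH algorithm:
`I - P = (I - R_U) (I - Ψ_D) (I - G_L)`. -/
theorem gth_RG_factorization {N : ℕ}
    (P : Matrix (Fin N) (Fin N) ℝ) (hP : RowStochastic P) (hirr : MatIrreducible P)
    (hden : ∀ m : ℕ, 1 ≤ m → m + 1 ≤ N → 0 < gthS P m) :
    (1 : Matrix (Fin N) (Fin N) ℝ) - P =
      (1 - gthRU P) * (1 - gthPsi P) * (1 - gthGL P) :=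
  gth_aux N P hP hden
end

section
/- (Invariance of the G-measure under censoring.) Let P : ℕ → ℕ → ℝ≥0∞ be row-stochastic, and for m ≥ 1 let E_m = {1, 2, …, m}. For states 1 ≤ j < i, the G-measure of a transition function M on a set containing E_i is defined by g_{i,j}(M) := (M^{E_i})_{i,j} / (1 − (M^{E_i})_{i,i}). Then for all 1 ≤ j < i ≤ n, the G-measure computed from the censored chain P^{E_n} agrees with that of P: g_{i,j}(P^{E_n}) = g_{i,j}(P). -/
open scoped ENNReal

/-- The censored (taboo-path) transition probability. -/
noncomputable def censored {α : Type*} (P : α → α → ℝ≥0∞) (E : Set α) (i j : α) : ℝ≥0∞ :=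
  P i j + ∑' (n : ℕ), ∑' (w : Fin (n + 1) → ↥Eᶜ),
    P i ↑(w 0) * (∏ k : Fin n, P ↑(w k.castSucc) ↑(w k.succ)) * P ↑(w (Fin.last n)) j

/-- A countable-state transition function is row-stochastic if each row sums to 1. -/
def RowStoch (P : ℕ → ℕ → ℝ≥0∞) : Prop := ∀ i, ∑' j, P i j = 1

/-- The G-measure of a transition function `M` relative to the censoring set `E` (playing
the role of `E_i = {1, …, i}`): `g_{i,j} = (M^{E})_{i,j} / (1 - (M^{E})_{i,i})`. -/
noncomputable def gMeasure {α : Type*} (M : α → α → ℝ≥0∞) (E : Set α) (i j : α) : ℝ≥0∞ :=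
  censored M E i j / (1 - censored M E i i)

section Aux

noncomputable def wordProd {α : Type*} (P : α → α → ℝ≥0∞) : α → α → List α → ℝ≥0∞
  | i, j, [] => P i j
  | i, j, a :: l => P i a * wordProd P a j l

variable {α : Type*} (P : α → α → ℝ≥0∞)

@[simp] lemma wordProd_nil (i j : α) : wordProd P i j [] = P i j := rfl
@[simp] lemma wordProd_cons (i j a : α) (l : List α) :
    wordProd P i j (a :: l) = P i a * wordProd P a j l := rfl

lemma wordProd_append (i j a : α) (u v : List α) :
    wordProd P i j (u ++ a :: v) = wordProd P i a u * wordProd P a j v := by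
  induction u generalizing i with
  | nil => simp
  | cons b u ih => simp [ih, mul_assoc]

lemma wordProd_comap {α' : Type*} (g : α' → α) (x y : α') (l : List α') :
    wordProd (fun a b => P (g a) (g b)) x y l = wordProd P (g x) (g y) (l.map g) := by
  induction l generalizing x with
  | nil => rfl
  | cons a l ih => simp [ih]

lemma wordProd_ofFn (i j : α) {n : ℕ} (w : Fin (n + 1) → α) :
    wordProd P i j (List.ofFn w) =
      P i (w 0) * (∏ k : Fin n, P (w k.castSucc) (w k.succ)) * P (w (Fin.last n)) j := by
  induction n generalizing i with
  | zero => simp [wordProd]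
  | succ n ih =>
    rw [List.ofFn_succ, wordProd_cons, ih (w 0) (fun k => w k.succ)]
    simp [Fin.prod_univ_succ, Fin.succ_last, mul_assoc]

lemma tsum_list {X : Type*} (g : List X → ℝ≥0∞) :
    ∑' l : List X, g l = g [] + ∑' n : ℕ, ∑' w : Fin (n + 1) → X, g (List.ofFn w) := by
  rw [← List.equivSigmaTuple.symm.tsum_eq g, ENNReal.tsum_sigma',
    tsum_eq_zero_add' ENNReal.summable]
  congr 1
  · rw [tsum_eq_single (fun i : Fin 0 => i.elim0)
      (fun w hw => absurd (Subsingleton.elim w _) hw)]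
    simp [List.equivSigmaTuple]

lemma tsum_list' {X : Type*} (g : List X → ℝ≥0∞) :
    ∑' l : List X, g l = ∑' n : ℕ, ∑' w : Fin n → X, g (List.ofFn w) := by
  rw [← List.equivSigmaTuple.symm.tsum_eq g, ENNReal.tsum_sigma']
  rfl

def consEquiv (X : Type*) (m : ℕ) : X × (Fin m → X) ≃ (Fin (m + 1) → X) where
  toFun p := Fin.cons p.1 p.2
  invFun w := (w 0, fun k => w k.succ)
  left_inv p := by simp
  right_inv w := Fin.cons_self_tail w

lemma tsum_fin_succ {X : Type*} (m : ℕ) (F : (Fin (m + 1) → X) → ℝ≥0∞) :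
    ∑' w : Fin (m + 1) → X, F w = ∑' x : X, ∑' v : Fin m → X, F (Fin.cons x v) := by
  rw [← (consEquiv X m).tsum_eq F, ENNReal.tsum_prod']
  rfl

lemma ofFn_cons {X : Type*} (m : ℕ) (x : X) (v : Fin m → X) :
    List.ofFn (Fin.cons x v) = x :: List.ofFn v := by
  simp [List.ofFn_succ]

lemma censored_eq_tsum_list (E : Set α) (i j : α) :
    censored P E i j = ∑' l : List ↥Eᶜ, wordProd P i j (l.map Subtype.val) := by
  rw [tsum_list, censored]
  congr 1
  refine tsum_congr fun n => tsum_congr fun w => ?_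
  rw [List.map_ofFn, wordProd_ofFn]
  rfl

section Master
variable {β γ : Type*} (fβ : β → α) (fγ : γ → α) (j : α)

/-- transitions of the once-censored chain, as a list sum -/
noncomputable def Gker : α → α → ℝ≥0∞ := fun x y => ∑' l : List γ, wordProd P x y (l.map fγ)

noncomputable def chain : α → List γ → List (β × List γ) → ℝ≥0∞
  | x, t, [] => wordProd P x j (t.map fγ)
  | x, t, (b, l) :: ps => wordProd P x (fβ b) (t.map fγ) * chain (fβ b) l ps

def embed : List γ × List (β × List γ) → List (β ⊕ γ) :=
  fun p => p.1.map Sum.inr ++ p.2.flatMap (fun q => Sum.inl q.1 :: q.2.map Sum.inr)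

lemma embed_nil (t : List γ) : embed (β := β) (t, []) = t.map Sum.inr := by
  simp [embed]

lemma embed_cons (t : List γ) (b : β) (l : List γ) (ps : List (β × List γ)) :
    embed (t, (b, l) :: ps) = t.map Sum.inr ++ Sum.inl b :: embed (l, ps) := by
  simp [embed, List.flatMap_cons]

def splitL : List (β ⊕ γ) → List γ × List (β × List γ)
  | [] => ([], [])
  | Sum.inr g :: l => ((g :: (splitL l).1), (splitL l).2)
  | Sum.inl b :: l => ([], (b, (splitL l).1) :: (splitL l).2)

lemma splitL_inr_append (t : List γ) (r : List (β ⊕ γ)) :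
    splitL (t.map Sum.inr ++ r) = ((t ++ (splitL r).1 : List γ), (splitL r).2) := by
  induction t with
  | nil => simp
  | cons g t ih => simp [splitL, ih]

lemma splitL_embed (ps : List (β × List γ)) (t : List γ) :
    splitL (embed (t, ps)) = (t, ps) := by
  induction ps generalizing t with
  | nil => rw [embed_nil, ← List.append_nil (t.map Sum.inr), splitL_inr_append]; simp [splitL]
  | cons q ps ih =>
    obtain ⟨b, l⟩ := q
    rw [embed_cons, splitL_inr_append]
    simp [splitL, ih]

lemma embed_splitL (l : List (β ⊕ γ)) : embed (splitL l) = l := by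
  induction l with
  | nil => rfl
  | cons a l ih =>
    cases a with
    | inr g =>
      show embed (g :: (splitL l).1, (splitL l).2) = _
      have : embed ((g :: (splitL l).1 : List γ), (splitL l).2)
          = Sum.inr g :: embed (splitL l) := by simp [embed]
      rw [this, ih]
    | inl b =>
      show embed (([] : List γ), (b, (splitL l).1) :: (splitL l).2) = _
      rw [embed_cons]
      simp only [List.map_nil, List.nil_append]
      rw [Prod.mk.eta, ih]

def splitEquiv : List (β ⊕ γ) ≃ List γ × List (β × List γ) where
  toFun := splitL
  invFun := embed
  left_inv := embed_splitL
  right_inv := fun p => splitL_embed p.2 p.1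

lemma wordProd_embed (i : α) (t : List γ) (ps : List (β × List γ)) :
    wordProd P i j ((embed (t, ps)).map (Sum.elim fβ fγ)) = chain P fβ fγ j i t ps := by
  induction ps generalizing i t with
  | nil => rw [embed_nil]; simp [chain, List.map_map]
  | cons q ps ih =>
    obtain ⟨b, l⟩ := q
    rw [embed_cons, List.map_append, List.map_cons, Sum.elim_inl, wordProd_append, ih]
    simp [chain, List.map_map]

noncomputable def Lm (m : ℕ) (x : α) : ℝ≥0∞ :=
  ∑' v : Fin m → β × List γ, ∑' t : List γ, chain P fβ fγ j x t (List.ofFn v)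

noncomputable def Rm (m : ℕ) (x : α) : ℝ≥0∞ :=
  ∑' q : Fin m → β, wordProd (Gker P fγ) x j ((List.ofFn q).map fβ)

lemma Lm_eq_Rm : ∀ m (x : α), Lm P fβ fγ j m x = Rm P fβ fγ j m x := by
  intro m
  induction m with
  | zero =>
    intro x
    rw [Lm, Rm]
    rw [tsum_eq_single (fun i : Fin 0 => i.elim0)
      (fun w hw => absurd (Subsingleton.elim w _) hw),
      tsum_eq_single (fun i : Fin 0 => i.elim0)
      (fun w hw => absurd (Subsingleton.elim w _) hw)]
    simp [chain, Gker]
  | succ m ih =>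
    intro x
    rw [Lm, Rm, tsum_fin_succ, tsum_fin_succ, ENNReal.tsum_prod']
    refine tsum_congr fun b => ?_
    calc ∑' (l : List γ), ∑' (v : Fin m → β × List γ), ∑' (t : List γ),
          chain P fβ fγ j x t (List.ofFn (Fin.cons (b, l) v))
        = ∑' (l : List γ), ∑' (v : Fin m → β × List γ), ∑' (t : List γ),
          wordProd P x (fβ b) (t.map fγ) * chain P fβ fγ j (fβ b) l (List.ofFn v) := by
          refine tsum_congr fun l => tsum_congr fun v => tsum_congr fun t => ?_
          rw [ofFn_cons]; rfl
      _ = ∑' (l : List γ), ∑' (v : Fin m → β × List γ),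
          Gker P fγ x (fβ b) * chain P fβ fγ j (fβ b) l (List.ofFn v) := by
          refine tsum_congr fun l => tsum_congr fun v => ?_
          rw [ENNReal.tsum_mul_right]; rfl
      _ = Gker P fγ x (fβ b) * ∑' (l : List γ), ∑' (v : Fin m → β × List γ),
          chain P fβ fγ j (fβ b) l (List.ofFn v) := by
          rw [← ENNReal.tsum_mul_left]
          exact tsum_congr fun l => ENNReal.tsum_mul_left.symm ▸ ENNReal.tsum_mul_left
      _ = Gker P fγ x (fβ b) * Lm P fβ fγ j m (fβ b) := by
          rw [Lm, ENNReal.tsum_comm]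
      _ = Gker P fγ x (fβ b) * Rm P fβ fγ j m (fβ b) := by rw [ih]
      _ = ∑' (q : Fin m → β), wordProd (Gker P fγ) x j
            ((List.ofFn (Fin.cons b q)).map fβ) := by
          rw [Rm, ← ENNReal.tsum_mul_left]
          refine tsum_congr fun q => ?_
          rw [ofFn_cons]; rfl

lemma master (i : α) :
    ∑' l : List (β ⊕ γ), wordProd P i j (l.map (Sum.elim fβ fγ)) =
      ∑' q : List β, wordProd (Gker P fγ) i j (q.map fβ) := by
  rw [← (splitEquiv (β := β) (γ := γ)).symm.tsum_eq
    (fun l => wordProd P i j (l.map (Sum.elim fβ fγ)))]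
  calc ∑' p : List γ × List (β × List γ),
        wordProd P i j (((splitEquiv).symm p).map (Sum.elim fβ fγ))
      = ∑' p : List γ × List (β × List γ), chain P fβ fγ j i p.1 p.2 := by
        refine tsum_congr fun p => ?_
        exact wordProd_embed P fβ fγ j i p.1 p.2
    _ = ∑' ps : List (β × List γ), ∑' t : List γ, chain P fβ fγ j i t ps := by
        rw [ENNReal.tsum_prod', ENNReal.tsum_comm]
    _ = ∑' m : ℕ, ∑' v : Fin m → β × List γ, ∑' t : List γ,
          chain P fβ fγ j i t (List.ofFn v) := by
        rw [tsum_list' (fun ps => ∑' t : List γ, chain P fβ fγ j i t ps)]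
    _ = ∑' m : ℕ, Lm P fβ fγ j m i := rfl
    _ = ∑' m : ℕ, Rm P fβ fγ j m i := tsum_congr fun m => Lm_eq_Rm P fβ fγ j m i
    _ = ∑' q : List β, wordProd (Gker P fγ) i j (q.map fβ) := by
        rw [tsum_list' (fun q : List β => wordProd (Gker P fγ) i j (q.map fβ))]
        rfl
end Master

lemma censored_censored (P : ℕ → ℕ → ℝ≥0∞) {n i : ℕ} (hin : i ≤ n)
    (x y : ↥(Set.Icc 1 n)) :
    censored (fun a b : ↥(Set.Icc 1 n) => censored P (Set.Icc 1 n) ↑a ↑b)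
      {z : ↥(Set.Icc 1 n) | ↑z ∈ Set.Icc 1 i} x y = censored P (Set.Icc 1 i) ↑x ↑y := by
  classical
  let B : Set ℕ := Set.Icc 1 n
  let A : Set ℕ := Set.Icc 1 i
  let fβ : ↥({z : ↥B | (z : ℕ) ∈ A}ᶜ) → ℕ := fun z => ((z : ↥B) : ℕ)
  let fγ : ↥(Bᶜ) → ℕ := Subtype.val
  have hGker : Gker P fγ = fun a b => censored P B a b := by
    funext a b; rw [Gker, censored_eq_tsum_list]
  have hsub : ∀ z : ℕ, z ∈ A → z ∈ B := fun z hz => Set.Icc_subset_Icc_right hin hz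
  let e : ↥(Aᶜ) ≃ (↥({z : ↥B | (z : ℕ) ∈ A}ᶜ)) ⊕ ↥(Bᶜ) :=
    { toFun := fun z => if h : (z : ℕ) ∈ B then Sum.inl ⟨⟨z, h⟩, z.2⟩ else Sum.inr ⟨z, h⟩
      invFun := fun s => Sum.elim (fun b => ⟨fβ b, b.2⟩)
        (fun g => ⟨fγ g, fun hg => g.2 (hsub _ hg)⟩) s
      left_inv := fun z => by by_cases h : (z : ℕ) ∈ B <;> simp [h] <;> rfl
      right_inv := fun s => by
        cases s with
        | inl b => simp [fβ, (b : ↥B).2]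
        | inr g => simp only [Sum.elim_inr]; exact dif_neg g.2 }
  have hcompat : ∀ z : ↥(Aᶜ), Sum.elim fβ fγ (e z) = (z : ℕ) := fun z => by
    by_cases h : (z : ℕ) ∈ B <;> simp [e, h, fβ, fγ]
  have hLHS : censored (fun a b : ↥B => censored P B ↑a ↑b)
      {z : ↥B | (z : ℕ) ∈ A} x y =
      ∑' q : List ↥({z : ↥B | (z : ℕ) ∈ A}ᶜ),
        wordProd (Gker P fγ) ↑x ↑y (q.map fβ) := by
    rw [censored_eq_tsum_list]
    refine tsum_congr fun q => ?_
    rw [wordProd_comap (censored P B) (Subtype.val : ↥B → ℕ) x y (q.map Subtype.val),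
      List.map_map, hGker]
    rfl
  have hRHS : censored P A ↑x ↑y =
      ∑' l : List ((↥({z : ↥B | (z : ℕ) ∈ A}ᶜ)) ⊕ ↥(Bᶜ)),
        wordProd P ↑x ↑y (l.map (Sum.elim fβ fγ)) := by
    rw [censored_eq_tsum_list,
      ← (Equiv.listEquivOfEquiv e).symm.tsum_eq
        (fun l : List ↥(Aᶜ) => wordProd P ↑x ↑y (l.map Subtype.val))]
    refine tsum_congr fun l => ?_
    have : ((Equiv.listEquivOfEquiv e).symm l).map Subtype.val
        = l.map (Sum.elim fβ fγ) := by
      show (l.map e.symm).map Subtype.val = _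
      rw [List.map_map]
      refine List.map_congr_left fun s _ => ?_
      cases s with
      | inl b => rfl
      | inr g => rfl
    rw [this]
  rw [hLHS, hRHS, master]

end Aux

/-- Invariance of the G-measure under censoring: for `1 ≤ j < i ≤ n`, the G-measure
computed from the censored chain `P^{E_n}` (censoring it further to `E_i`) agrees with
the G-measure of `P`. -/
theorem gMeasure_invariant (P : ℕ → ℕ → ℝ≥0∞) (hP : RowStoch P)
    (n i j : ℕ) (h1 : 1 ≤ j) (hji : j < i) (hin : i ≤ n) :
    gMeasure (fun a b : ↥(Set.Icc 1 n) => censored P (Set.Icc 1 n) ↑a ↑b)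
        {x : ↥(Set.Icc 1 n) | ↑x ∈ Set.Icc 1 i}
        ⟨i, ⟨h1.trans hji.le, hin⟩⟩ ⟨j, ⟨h1, hji.le.trans hin⟩⟩ =
      gMeasure P (Set.Icc 1 i) i j := by
  rw [gMeasure, gMeasure, censored_censored P hin, censored_censored P hin]
end
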